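/- arXiv:1510.07525 — 2 statements merged into one kernel-verified Lean document; each statement's English description precedes it below -/
import Mathlib

section
/- Let H be a real Hilbert space, K ⊆ H a closed subspace with orthogonal projection P : H → K, and let f : H → ℝ be Fréchet differentiable with gradient ∇f : H → H (i.e. the Fréchet derivative satisfies f′(x)(v) = ⟪∇f(x), v⟫ for all x, v). Assume ∇f is α-strongly monotone on K for some α > 0. If z_γ ∈ K is a local minimum of f restricted to K, then for every z ∈ K one has ‖z − z_γ‖ ≤ (1/α)·‖P(∇f(z))‖ ≤ (1/α)·‖∇f(z)‖. -/
open scoped RealInnerProductSpace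

/-- Let `H` be a real Hilbert space, `K ⊆ H` a closed subspace with
orthogonal projection `P : H → K`, and let `f : H → ℝ` be Fréchet differentiable with
gradient `∇f : H → H`. Assume `∇f` is `α`-strongly monotone on `K` for some `α > 0`.
If `z_γ ∈ K` is a local minimum of `f` restricted to `K`, then for every `z ∈ K` one has
`‖z − z_γ‖ ≤ (1/α)·‖P (∇f z)‖ ≤ (1/α)·‖∇f z‖`. -/
theorem stmt_1 {H : Type*} [NormedAddCommGroup H] [InnerProductSpace ℝ H] [CompleteSpace H]
    (K : Submodule ℝ H) (hK : IsClosed (K : Set H)) [K.HasOrthogonalProjection]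
    (f : H → ℝ) (gradf : H → H) (hdiff : ∀ x, HasGradientAt f (gradf x) x)
    (α : ℝ) (hα : 0 < α)
    (hmono : ∀ z₁ ∈ K, ∀ z₂ ∈ K, α * ‖z₁ - z₂‖ ^ 2 ≤ ⟪gradf z₁ - gradf z₂, z₁ - z₂⟫)
    (zγ : H) (hzγ : zγ ∈ K)
    (hmin : ∃ ε > 0, ∀ y ∈ K, ‖y - zγ‖ < ε → f zγ ≤ f y) :
    ∀ z ∈ K, ‖z - zγ‖ ≤ (1 / α) * ‖(K.orthogonalProjectionOnto (gradf z) : H)‖ ∧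
      (1 / α) * ‖(K.orthogonalProjectionOnto (gradf z) : H)‖ ≤ (1 / α) * ‖gradf z‖ := by
  obtain ⟨ε, hε, hloc⟩ := hmin
  -- gradient at zγ is orthogonal to K
  have hgrad0 : ∀ v ∈ K, ⟪gradf zγ, v⟫ = 0 := by
    intro v hv
    -- g t = f (zγ + t • v) has a local min at 0
    have hc : ∀ t : ℝ, HasDerivAt (fun s : ℝ => zγ + s • v) v t := by
      intro t
      simpa using ((hasDerivAt_id t).smul_const v).const_add zγ
    have hg : HasDerivAt (fun t : ℝ => f (zγ + t • v)) ⟪gradf zγ, v⟫ 0 := by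
      have hfd : HasFDerivAt f ((InnerProductSpace.toDual ℝ H) (gradf zγ))
          (zγ + (0 : ℝ) • v) := by
        simpa using (hdiff zγ).hasFDerivAt
      have h := hfd.comp_hasDerivAt 0 (hc 0)
      simp at h
      exact h
    have hlm : IsLocalMin (fun t : ℝ => f (zγ + t • v)) 0 := by
      have : ∀ᶠ t : ℝ in nhds 0, ‖t‖ < ε / (‖v‖ + 1) := by
        have : (0 : ℝ) < ε / (‖v‖ + 1) := by positivity
        simpa [abs_lt] using eventually_abs_sub_lt 0 this
      filter_upwards [this] with t ht
      have hmem : zγ + t • v ∈ K := K.add_mem hzγ (K.smul_mem t hv)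
      have hnorm : ‖zγ + t • v - zγ‖ < ε := by
        have h1 : ‖t • v‖ = ‖t‖ * ‖v‖ := norm_smul t v
        have h2 : ‖t‖ * ‖v‖ < ε := by
          have hv1 : ‖v‖ < ‖v‖ + 1 := by linarith
          calc ‖t‖ * ‖v‖ ≤ ‖t‖ * (‖v‖ + 1) := by
                exact mul_le_mul_of_nonneg_left (by linarith) (norm_nonneg t)
            _ < ε / (‖v‖ + 1) * (‖v‖ + 1) := by
                apply mul_lt_mul_of_pos_right ht; positivity
            _ = ε := by field_simp
        simpa [h1] using h2
      simpa using hloc _ hmem hnorm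
    exact hlm.hasDerivAt_eq_zero hg
  intro z hz
  constructor
  · -- main inequality
    have hkey : α * ‖z - zγ‖ ^ 2 ≤ ⟪gradf z, z - zγ⟫ := by
      have := hmono z hz zγ hzγ
      have h0 : ⟪gradf zγ, z - zγ⟫ = 0 := hgrad0 _ (K.sub_mem hz hzγ)
      rw [inner_sub_left, h0, sub_zero] at this
      exact this
    have hproj : ⟪gradf z, z - zγ⟫ = ⟪(K.orthogonalProjectionOnto (gradf z) : H), z - zγ⟫ := by
      have hm : z - zγ ∈ K := K.sub_mem hz hzγ
      have h0 : ⟪gradf z - (K.orthogonalProjectionOnto (gradf z) : H), z - zγ⟫ = 0 :=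
        K.starProjection_inner_eq_zero (gradf z) (z - zγ) hm
      rw [inner_sub_left] at h0
      linarith
    have hcs : ⟪(K.orthogonalProjectionOnto (gradf z) : H), z - zγ⟫ ≤
        ‖(K.orthogonalProjectionOnto (gradf z) : H)‖ * ‖z - zγ‖ :=
      real_inner_le_norm _ _
    rcases eq_or_lt_of_le (norm_nonneg (z - zγ)) with h | h
    · rw [← h]; positivity
    · have : α * ‖z - zγ‖ ^ 2 ≤ ‖(K.orthogonalProjectionOnto (gradf z) : H)‖ * ‖z - zγ‖ := by
        rw [hproj] at hkey; linarith
      rw [div_mul_eq_mul_div, le_div_iff₀ hα, mul_comm]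
      nlinarith
  · have : ‖(K.orthogonalProjectionOnto (gradf z) : H)‖ ≤ ‖gradf z‖ := by
      have h1 := (K.orthogonalProjectionOnto).le_opNorm (gradf z)
      have h2 := K.orthogonalProjectionOnto_norm_le
      calc ‖(K.orthogonalProjectionOnto (gradf z) : H)‖ = ‖K.orthogonalProjectionOnto (gradf z)‖ := rfl
        _ ≤ ‖K.orthogonalProjectionOnto‖ * ‖gradf z‖ := h1
        _ ≤ 1 * ‖gradf z‖ := mul_le_mul_of_nonneg_right h2 (norm_nonneg _)
        _ = ‖gradf z‖ := one_mul _
    have h1α : (0 : ℝ) ≤ 1 / α := by positivity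
    exact mul_le_mul_of_nonneg_left this h1α
end

section
/- Let H be a real normed vector space, V ⊆ H a subspace, f : H → ℝ, z ∈ H, z_h ∈ V, and M ≥ 0. Assume: (i) f is twice continuously differentiable on an open set containing the closed segment [z_h, z], with ‖f″(x)‖ ≤ M for all x in the segment; (ii) the Galerkin orthogonality f′(z_h)(v) = 0 holds for all v ∈ V. Then for every w ∈ V, |f(z) − f(z_h)| ≤ ‖f′(z_h)‖·‖z − w‖ + (M/2)·‖z − z_h‖². -/
/-- Let `H` be a real normed vector space, `V ⊆ H` a subspace,
`f : H → ℝ`, `z ∈ H`, `z_h ∈ V`, and `M ≥ 0`. Assume: (i) `f` is twice continuously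
differentiable on an open set `U` containing the closed segment `[z_h, z]`, with
`‖f″(x)‖ ≤ M` for all `x` in the segment; (ii) the Galerkin orthogonality
`f′(z_h)(v) = 0` holds for all `v ∈ V`. Then for every `w ∈ V`,
`|f z − f z_h| ≤ ‖f′(z_h)‖·‖z − w‖ + (M/2)·‖z − z_h‖²`. -/
theorem stmt_5 {H : Type*} [NormedAddCommGroup H] [NormedSpace ℝ H]
    (V : Submodule ℝ H) (f : H → ℝ) (z zh : H) (hzh : zh ∈ V) (M : ℝ) (hM : 0 ≤ M)
    (U : Set H) (hU : IsOpen U) (hseg : segment ℝ zh z ⊆ U)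
    (hf : ContDiffOn ℝ 2 f U)
    (hbound : ∀ x ∈ segment ℝ zh z, ‖iteratedFDerivWithin ℝ 2 f U x‖ ≤ M)
    (hgal : ∀ v ∈ V, fderivWithin ℝ f U zh v = 0) :
    ∀ w ∈ V, |f z - f zh| ≤ ‖fderivWithin ℝ f U zh‖ * ‖z - w‖ + (M / 2) * ‖z - zh‖ ^ 2 := by
  intro w hw
  have hUD : UniqueDiffOn ℝ U := hU.uniqueDiffOn
  set F := fderivWithin ℝ f U with hFdef
  set L := F zh with hLdef
  have hzhU : zh ∈ U := hseg (left_mem_segment ℝ zh z)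
  have hzU : z ∈ U := hseg (right_mem_segment ℝ zh z)
  -- F is C¹ on U
  have hF1 : ContDiffOn ℝ 1 F U := hf.fderivWithin hUD (by norm_num)
  have hFdiff : DifferentiableOn ℝ F U := hF1.differentiableOn one_ne_zero
  -- norm of derivative of F equals norm of second iterated derivative
  have hnorm : ∀ x ∈ U, ‖fderivWithin ℝ F U x‖ = ‖iteratedFDerivWithin ℝ 2 f U x‖ := by
    intro x hx
    set e := continuousMultilinearCurryFin1 ℝ H ℝ with he
    have heq : Set.EqOn F (⇑e ∘ iteratedFDerivWithin ℝ 1 f U) U := by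
      intro y hy
      ext u
      simp [e, F, iteratedFDerivWithin_one_apply (hUD y hy), Fin.snoc]
    have h1 : fderivWithin ℝ F U x
        = fderivWithin ℝ (⇑e ∘ iteratedFDerivWithin ℝ 1 f U) U x :=
      fderivWithin_congr heq (heq hx)
    rw [h1, e.comp_fderivWithin (hUD x hx)]
    have h2 : ‖(e : (H[×1]→L[ℝ] ℝ) →L[ℝ] (H →L[ℝ] ℝ)).comp
        (fderivWithin ℝ (iteratedFDerivWithin ℝ 1 f U) U x)‖
        = ‖fderivWithin ℝ (iteratedFDerivWithin ℝ 1 f U) U x‖ :=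
      e.toLinearIsometry.norm_toContinuousLinearMap_comp
    rw [h2]
    exact norm_fderivWithin_iteratedFDerivWithin
  -- F is M-Lipschitz on the segment
  have hseg_conv : Convex ℝ (segment ℝ zh z) := convex_segment zh z
  have hFlip : ∀ x ∈ segment ℝ zh z, ‖F x - L‖ ≤ M * ‖x - zh‖ := by
    intro x hx
    have h := hseg_conv.norm_image_sub_le_of_norm_hasFDerivWithin_le
      (f := F) (f' := fun y => fderivWithin ℝ F U y)
      (fun y hy => ((hFdiff y (hseg hy)).hasFDerivWithinAt).mono hseg)
      (fun y hy => by rw [hnorm y (hseg hy)]; exact hbound y hy)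
      (left_mem_segment ℝ zh z) hx
    simpa using h
  -- the path
  set v := z - zh with hvdef
  set γ : ℝ → H := fun t => zh + t • v with hγ
  have hγmem : ∀ t ∈ Set.Icc (0:ℝ) 1, γ t ∈ segment ℝ zh z := by
    intro t ht
    rw [segment_eq_image']
    exact ⟨t, ht, rfl⟩
  set ψ : ℝ → ℝ := fun t => f (γ t) - L (γ t) - (f zh - L zh) with hψdef
  have hψd : ∀ t ∈ Set.Icc (0:ℝ) 1, HasDerivAt ψ ((F (γ t) - L) v) t := by
    intro t ht
    have hmem : γ t ∈ U := hseg (hγmem t ht)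
    have hγd : HasDerivAt γ v t := by
      simpa [γ] using ((hasDerivAt_id t).smul_const v).const_add zh
    have hfd : HasFDerivAt f (F (γ t)) (γ t) := by
      have hd := (hf.differentiableOn (by norm_num)).differentiableAt (hU.mem_nhds hmem)
      have : F (γ t) = fderiv ℝ f (γ t) := by
        rw [hFdef, fderivWithin_of_isOpen hU hmem]
      rw [this]
      exact hd.hasFDerivAt
    have h1 : HasDerivAt (fun s => f (γ s)) (F (γ t) v) t := hfd.comp_hasDerivAt t hγd
    have h2 : HasDerivAt (fun s => L (γ s)) (L v) t :=
      (L.hasFDerivAt (x := γ t)).comp_hasDerivAt t hγd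
    have := (h1.sub h2).sub_const (f zh - L zh)
    simpa [ψ, ContinuousLinearMap.sub_apply] using this
  -- comparison estimate
  have hψ0 : ψ 0 = 0 := by simp [ψ, γ]
  have hB : ∀ t : ℝ, HasDerivAt (fun s : ℝ => M / 2 * s ^ 2 * ‖v‖ ^ 2) (M * t * ‖v‖ ^ 2) t := by
    intro t
    have h := ((hasDerivAt_pow 2 t).const_mul (M / 2)).mul_const (‖v‖ ^ 2)
    refine h.congr_deriv ?_
    push_cast; ring
  have key : ‖ψ 1‖ ≤ M / 2 * ‖v‖ ^ 2 := by
    have h := image_norm_le_of_norm_deriv_right_le_deriv_boundary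
      (f := ψ) (f' := fun t => (F (γ t) - L) v) (a := 0) (b := 1)
      (fun t ht => (hψd t ht).continuousAt.continuousWithinAt)
      (fun t ht => (hψd t (Set.Ico_subset_Icc_self ht)).hasDerivWithinAt)
      (B := fun s => M / 2 * s ^ 2 * ‖v‖ ^ 2) (B' := fun s => M * s * ‖v‖ ^ 2)
      (by simp [hψ0]) hB
      (fun t ht => by
        have htseg := hγmem t (Set.Ico_subset_Icc_self ht)
        have h1 : ‖(F (γ t) - L) v‖ ≤ ‖F (γ t) - L‖ * ‖v‖ :=
          (F (γ t) - L).le_opNorm v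
        have h2 : ‖F (γ t) - L‖ ≤ M * (t * ‖v‖) := by
          have := hFlip _ htseg
          have hγt : ‖γ t - zh‖ = t * ‖v‖ := by
            simp [γ, norm_smul, abs_of_nonneg ht.1]
          rwa [hγt] at this
        calc ‖(F (γ t) - L) v‖ ≤ (M * (t * ‖v‖)) * ‖v‖ :=
              h1.trans (mul_le_mul_of_nonneg_right h2 (norm_nonneg v))
          _ = M * t * ‖v‖ ^ 2 := by ring)
      (Set.right_mem_Icc.2 zero_le_one)
    simpa using h
  -- assemble
  have hγ1 : γ 1 = z := by simp [γ, v]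
  have hψ1 : ψ 1 = f z - f zh - L v := by
    simp only [ψ, hγ1, hvdef, map_sub]
    ring
  have hLwzh : L (w - zh) = 0 := hgal _ (V.sub_mem hw hzh)
  have hLv : L v = L (z - w) := by
    have : L v = L (z - w) + L (w - zh) := by
      rw [← map_add]
      congr 1
      rw [hvdef]; abel
    rw [this, hLwzh, add_zero]
  have hfz : f z - f zh = L (z - w) + ψ 1 := by
    rw [hψ1, hLv]; ring
  have hLbound : |L (z - w)| ≤ ‖L‖ * ‖z - w‖ := by
    simpa [Real.norm_eq_abs] using L.le_opNorm (z - w)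
  calc |f z - f zh| = |L (z - w) + ψ 1| := by rw [hfz]
    _ ≤ |L (z - w)| + |ψ 1| := abs_add_le _ _
    _ ≤ ‖L‖ * ‖z - w‖ + M / 2 * ‖v‖ ^ 2 := by
        refine add_le_add hLbound ?_
        simpa [Real.norm_eq_abs] using key
    _ = ‖fderivWithin ℝ f U zh‖ * ‖z - w‖ + (M / 2) * ‖z - zh‖ ^ 2 := by rw [hLdef, hFdef, hvdef]
end
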